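/- Let p be an odd prime, K = Q(ζ_p), p = (1-ζ_p), and let x be a unit of ℤ[ζ_p] with x ≡ 1 (mod p²). Then x lies in the maximal real subfield Q(ζ_p + ζ_p^{-1}). Consequently ν_p(x - 1) is even, so units congruent to 1 mod p^k for odd k ≥ 3 are automatically congruent to 1 mod p^{k+1}. -/

import Mathlib

open NumberField

/-- Let `p` be an odd prime, `K = ℚ(ζ_p)`, `𝔭 = (1 - ζ_p)`, and let `x` be a unit of
`ℤ[ζ_p]` with `x ≡ 1 (mod 𝔭²)`.  Then `x` lies in the maximal real subfield
`ℚ(ζ_p + ζ_p⁻¹)`, i.e. it is fixed by complex conjugation (the automorphism `σ`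
sending `ζ_p` to `ζ_p⁻¹`).  Consequently the `𝔭`-adic valuation of `x - 1` is even,
so units congruent to `1 mod 𝔭^k` for odd `k ≥ 3` are automatically congruent to
`1 mod 𝔭^(k+1)`. -/
theorem stmt6 (p : ℕ+) (hp : (p : ℕ).Prime) (hodd : (p : ℕ) ≠ 2)
    (K : Type*) [Field K] [NumberField K] [IsCyclotomicExtension {(p : ℕ)} ℚ K]
    (ζ : 𝓞 K) (hζ : IsPrimitiveRoot ζ p)
    (σ : K ≃ₐ[ℚ] K) (hσ : σ (ζ : K) = (ζ : K)⁻¹)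
    (x : (𝓞 K)ˣ) (hx : (x : 𝓞 K) - 1 ∈ (Ideal.span {1 - ζ}) ^ 2) :
    σ ((x : 𝓞 K) : K) = ((x : 𝓞 K) : K) ∧
    ∀ k : ℕ, 3 ≤ k → Odd k →
      (x : 𝓞 K) - 1 ∈ (Ideal.span {1 - ζ}) ^ k →
      (x : 𝓞 K) - 1 ∈ (Ideal.span {1 - ζ}) ^ (k + 1) := by
  classical
  have hfact : Fact (p : ℕ).Prime := ⟨hp⟩
  have hp1 : 1 < (p : ℕ) := hp.one_lt
  have hppos : 0 < (p : ℕ) := hp.pos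
  set π : 𝓞 K := 1 - ζ with hπdef
  set I : Ideal (𝓞 K) := Ideal.span {π} with hIdef
  have hζK : IsPrimitiveRoot ((ζ : K)) (p : ℕ) :=
    hζ.map_of_injective RingOfIntegers.coe_injective
  have hζpow : ζ ^ (p : ℕ) = 1 := hζ.pow_eq_one
  have hζne1 : ζ ≠ 1 := hζ.ne_one hp1
  have hπne : π ≠ 0 := by
    rw [hπdef, sub_ne_zero]
    exact fun h => hζne1 h.symm
  have hπneg : π = -(ζ - 1) := by rw [hπdef, neg_sub]
  have htoInt : hζK.toInteger = ζ := by ext; rfl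
  have hprime : Prime π := by
    have h := hζK.zeta_sub_one_prime'.neg
    rw [htoInt, neg_sub] at h
    exact h
  have hIprime : I.IsPrime := (Ideal.span_singleton_prime hπne).2 hprime
  have hIne : I ≠ ⊤ := hIprime.ne_top
  have hpI : (((p : ℕ) : ℤ) : 𝓞 K) ∈ I := by
    have h := hζK.toInteger_sub_one_dvd_prime'
    rw [htoInt] at h
    rw [hIdef, Ideal.mem_span_singleton, hπneg, neg_dvd]
    exact_mod_cast h
  have h2I : (2 : 𝓞 K) ∉ I := by
    intro h2
    have hcop : IsCoprime (2 : ℤ) ((p : ℕ) : ℤ) := by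
      have h2 : IsCoprime (((2 : ℕ) : ℤ)) (((p : ℕ) : ℤ)) :=
        Nat.isCoprime_iff_coprime.2 ((Nat.coprime_primes Nat.prime_two hp).2 (Ne.symm hodd))
      exact_mod_cast h2
    obtain ⟨a, b, hab⟩ := hcop
    have h1 : (1 : 𝓞 K) ∈ I := by
      have hmem := I.add_mem (I.mul_mem_left ((a : ℤ) : 𝓞 K) h2)
        (I.mul_mem_left ((b : ℤ) : 𝓞 K) hpI)
      have hcast : ((a : ℤ) : 𝓞 K) * 2 + ((b : ℤ) : 𝓞 K) * (((p : ℕ) : ℤ) : 𝓞 K)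
          = (1 : 𝓞 K) := by
        have := congrArg (fun t : ℤ => ((t : ℤ) : 𝓞 K)) hab
        push_cast at this ⊢
        exact_mod_cast hab
      rwa [hcast] at hmem
    exact hIne (Ideal.eq_top_of_isUnit_mem I h1 isUnit_one)
  -- the Galois action on the ring of integers
  set σO : 𝓞 K ≃ₐ[ℤ] 𝓞 K := galRestrict ℤ ℚ K (𝓞 K) σ with hσOdef
  have hcoeσ : ∀ y : 𝓞 K, ((σO y : 𝓞 K) : K) = σ ((y : 𝓞 K) : K) := fun y =>
    algebraMap_galRestrict_apply ℤ σ y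
  have hζKinv : ((ζ : K))⁻¹ = (ζ : K) ^ ((p : ℕ) - 1) := by
    have h1 : (ζ : K) * (ζ : K) ^ ((p : ℕ) - 1) = 1 := by
      rw [← pow_succ', Nat.sub_add_cancel hppos]
      exact hζK.pow_eq_one
    exact inv_eq_of_mul_eq_one_right h1
  have hσζ : σO ζ = ζ ^ ((p : ℕ) - 1) := by
    apply RingOfIntegers.ext
    rw [hcoeσ ζ, hσ, hζKinv]
    exact (map_pow (algebraMap (𝓞 K) K) ζ _).symm
  have hmulζ : ζ ^ ((p : ℕ) - 1) * ζ = 1 := by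
    rw [← pow_succ, Nat.sub_add_cancel hppos]
    exact hζpow
  have hσπ : σO π = (-ζ ^ ((p : ℕ) - 1)) * π := by
    rw [hπdef, map_sub, map_one, hσζ]
    linear_combination -hmulζ
  have hmapmem : ∀ (k : ℕ) (y : 𝓞 K), y ∈ I ^ k → σO y ∈ I ^ k := by
    intro k y hy
    rw [hIdef, Ideal.span_singleton_pow, Ideal.mem_span_singleton] at hy ⊢
    obtain ⟨c, hc⟩ := hy
    exact ⟨(-ζ ^ ((p : ℕ) - 1)) ^ k * σO c, by rw [hc, map_mul, map_pow, hσπ, mul_pow]; ring⟩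
  have hpowsub : ∀ m : ℕ, ζ ^ m - 1 ∈ I := by
    intro m
    rw [hIdef, Ideal.mem_span_singleton, hπneg, neg_dvd]
    simpa using sub_dvd_pow_sub_pow ζ 1 m
  have hζI : ζ - 1 ∈ I := by simpa using hpowsub 1
  have hres : ∀ y : 𝓞 K, σO y - y ∈ I := by
    have htop : Algebra.adjoin ℤ ({ζ} : Set (𝓞 K)) = ⊤ :=
      IsCyclotomicExtension.adjoin_primitive_root_eq_top hζ
    intro y
    have hy : y ∈ Algebra.adjoin ℤ ({ζ} : Set (𝓞 K)) := htop.symm ▸ Algebra.mem_top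
    induction hy using Algebra.adjoin_induction with
    | mem z hz =>
      rw [Set.mem_singleton_iff] at hz
      subst hz
      rw [hσζ]
      have h := I.sub_mem (hpowsub ((p : ℕ) - 1)) hζI
      convert h using 1
      ring
    | algebraMap r => rw [AlgEquiv.commutes, sub_self]; exact I.zero_mem
    | add a b ha hb hia hib =>
      rw [map_add]
      have h := I.add_mem hia hib
      convert h using 1
      ring
    | mul a b ha hb hia hib =>
      rw [map_mul]
      have heq : σO a * σO b - a * b = σO a * (σO b - b) + (σO a - a) * b := by ring
      rw [heq]
      exact I.add_mem (I.mul_mem_left _ hib) (I.mul_mem_right _ hia)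
  -- definition of w = x / σO x
  obtain ⟨xinv, hxinv⟩ : ∃ y, (x : 𝓞 K) * y = 1 := ⟨((x⁻¹ : (𝓞 K)ˣ) : 𝓞 K), x.mul_inv⟩
  set w : 𝓞 K := (x : 𝓞 K) * σO xinv with hwdef
  have hσσinv : σO (x : 𝓞 K) * σO xinv = 1 := by rw [← map_mul, hxinv, map_one]
  have hw1 : w - 1 ∈ I ^ 2 := by
    have hx' : σO (x : 𝓞 K) - 1 ∈ I ^ 2 := by
      have h := hmapmem 2 _ hx
      rwa [map_sub, map_one] at h
    have hkey : w - 1 = (((x : 𝓞 K) - 1) - (σO (x : 𝓞 K) - 1)) * σO xinv := by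
      rw [hwdef]
      linear_combination hσσinv
    rw [hkey]
    exact Ideal.mul_mem_right _ _ ((I ^ 2).sub_mem hx hx')
  -- complex embeddings: σ acts as conjugation
  have hconj : ∀ (φ : K →+* ℂ) (z : K), φ (σ z) = (starRingEnd ℂ) (φ z) := by
    intro φ z
    have hφζ : ‖φ ((ζ : K))‖ = 1 := by
      have hpow : (φ ((ζ : K))) ^ (p : ℕ) = 1 := by
        rw [← map_pow]
        have : ((ζ : K)) ^ (p : ℕ) = 1 := hζK.pow_eq_one
        rw [this, map_one]
      have hnorm : ‖φ ((ζ : K))‖ ^ (p : ℕ) = 1 := by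
        rw [← norm_pow, hpow, norm_one]
      have hone : ‖φ ((ζ : K))‖ ^ (p : ℕ) = 1 ^ (p : ℕ) := by rw [hnorm, one_pow]
      exact (pow_left_inj₀ (norm_nonneg _) zero_le_one hppos.ne').1 hone
    have hKtop : Algebra.adjoin ℚ ({((ζ : K))} : Set K) = ⊤ :=
      IsCyclotomicExtension.adjoin_primitive_root_eq_top hζK
    have hz : z ∈ Algebra.adjoin ℚ ({((ζ : K))} : Set K) := hKtop.symm ▸ Algebra.mem_top
    induction hz using Algebra.adjoin_induction with
    | mem t ht =>
      rw [Set.mem_singleton_iff] at ht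
      subst ht
      rw [hσ, map_inv₀, Complex.inv_eq_conj hφζ]
    | algebraMap r =>
      rw [AlgEquiv.commutes]
      simp
    | add a b ha hb hia hib => simp only [map_add, hia, hib]
    | mul a b ha hb hia hib => simp only [map_mul, hia, hib]
  have hxKne : (((x : 𝓞 K) : 𝓞 K) : K) ≠ 0 := by
    rw [RingOfIntegers.coe_eq_algebraMap, map_ne_zero_iff _ RingOfIntegers.coe_injective]
    exact x.ne_zero
  have hinvcoe : ((xinv : 𝓞 K) : K) = (((x : 𝓞 K) : K))⁻¹ := by
    have h : ((x : 𝓞 K) : K) * ((xinv : 𝓞 K) : K) = 1 := by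
      rw [← map_mul, hxinv, map_one]
    exact (inv_eq_of_mul_eq_one_right h).symm
  have hnorm1 : ∀ φ : K →+* ℂ, ‖φ ((w : K))‖ = 1 := by
    intro φ
    have hwcoe : ((w : K)) = ((x : 𝓞 K) : K) * σ ((xinv : 𝓞 K) : K) := by
      have hmul : ((w : K)) = ((x : 𝓞 K) : K) * ((σO xinv : 𝓞 K) : K) := by
        rw [hwdef]; exact map_mul (algebraMap (𝓞 K) K) _ _
      rw [hmul, hcoeσ]
    rw [hwcoe, map_mul, hconj φ, hinvcoe, map_inv₀, norm_mul, RCLike.norm_conj, norm_inv]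
    rw [mul_inv_cancel₀]
    simp
  have hwint : IsIntegral ℤ ((w : K)) := RingOfIntegers.isIntegral_coe w
  obtain ⟨n, hnpos, hn⟩ :=
    NumberField.Embeddings.pow_eq_one_of_norm_eq_one K ℂ hwint hnorm1
  have hfin : IsOfFinOrder ((w : K)) := isOfFinOrder_iff_pow_eq_one.2 ⟨n, hnpos, hn⟩
  obtain ⟨r, hrp, hr⟩ :=
    hζK.exists_pow_or_neg_mul_pow_of_isOfFinOrder (hp.odd_of_ne_two hodd) hfin
  have hfix : σO (x : 𝓞 K) = (x : 𝓞 K) := by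
    have hwx : w * σO (x : 𝓞 K) = (x : 𝓞 K) := by
      rw [hwdef, mul_assoc, mul_comm (σO xinv), hσσinv, mul_one]
    rcases hr with hr | hr
    · -- w = ζ ^ r
      have hwr : w = ζ ^ r := by
        apply RingOfIntegers.ext
        rw [hr]
        exact (map_pow (algebraMap (𝓞 K) K) ζ r).symm
      by_cases hr0 : r = 0
      · subst hr0
        rw [pow_zero] at hwr
        rw [hwr, one_mul] at hwx
        exact hwx
      · exfalso
        have h1 : ζ ^ r - 1 ∈ I ^ 2 := hwr ▸ hw1
        have hcop : Nat.Coprime r (p : ℕ) := by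
          refine Nat.Coprime.symm ((Nat.Prime.coprime_iff_not_dvd hp).2 fun hdvd => ?_)
          exact hr0 (Nat.eq_zero_of_dvd_of_lt hdvd hrp)
        have hprim : IsPrimitiveRoot (ζ ^ r) (p : ℕ) := hζ.pow_of_coprime r hcop
        have hnz : NeZero (p : ℕ) := ⟨hppos.ne'⟩
        obtain ⟨s, -, hs⟩ := hprim.eq_pow_of_pow_eq_one hζpow
        have hdvd : ζ ^ r - 1 ∣ ζ - 1 := by
          have hd : ζ ^ r - 1 ∣ (ζ ^ r) ^ s - 1 := by
            simpa using sub_dvd_pow_sub_pow (ζ ^ r) 1 s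
          rwa [hs] at hd
        have hζ1 : ζ - 1 ∈ I ^ 2 := by
          obtain ⟨c, hc⟩ := hdvd
          rw [hc]
          exact Ideal.mul_mem_right _ _ h1
        have hππ : π ∈ I ^ 2 := by
          rw [hπneg]
          exact (I ^ 2).neg_mem hζ1
        rw [hIdef, Ideal.span_singleton_pow, Ideal.mem_span_singleton] at hππ
        obtain ⟨c, hc⟩ := hππ
        have h2c : π * 1 = π * (π * c) := by
          rw [mul_one]
          conv_lhs => rw [hc]
          ring
        have hone : (1 : 𝓞 K) = π * c := mul_left_cancel₀ hπne h2c
        exact hprime.not_unit (IsUnit.of_mul_eq_one _ hone.symm)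
    · -- w = -ζ ^ r : impossible
      exfalso
      have hwr : w = -ζ ^ r := by
        apply RingOfIntegers.ext
        rw [hr]
        push_cast
        rfl
      have h1 : (-ζ ^ r : 𝓞 K) - 1 ∈ I := Ideal.pow_le_self two_ne_zero (hwr ▸ hw1)
      have h2 : ζ ^ r - 1 ∈ I := hpowsub r
      have hneg2 : (-2 : 𝓞 K) ∈ I := by
        have h := I.add_mem h1 h2
        convert h using 1
        ring
      exact h2I (by simpa using I.neg_mem hneg2)
  constructor
  · rw [← hcoeσ, hfix]
  · intro k hk3 hkodd hxk
    rw [hIdef, Ideal.span_singleton_pow, Ideal.mem_span_singleton] at hxk ⊢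
    obtain ⟨z, hz⟩ := hxk
    by_cases hzI : z ∈ I
    · rw [hIdef, Ideal.mem_span_singleton] at hzI
      obtain ⟨c, hcz⟩ := hzI
      exact ⟨c, by rw [hz, hcz]; ring⟩
    · exfalso
      have hσx1 : σO ((x : 𝓞 K) - 1) = (x : 𝓞 K) - 1 := by
        rw [map_sub, map_one, hfix]
      have heq : π ^ k * z = π ^ k * ((-ζ ^ ((p : ℕ) - 1)) ^ k * σO z) := by
        conv_lhs => rw [← hz, ← hσx1, hz]
        rw [map_mul, map_pow, hσπ, mul_pow]
        ring
      have hzeq : z = (-ζ ^ ((p : ℕ) - 1)) ^ k * σO z :=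
        mul_left_cancel₀ (pow_ne_zero k hπne) heq
      have hneg : ((-ζ ^ ((p : ℕ) - 1) : 𝓞 K)) ^ k = -(ζ ^ ((p : ℕ) - 1)) ^ k :=
        Odd.neg_pow hkodd _
      have hsum : z + (ζ ^ ((p : ℕ) - 1)) ^ k * σO z = 0 := by
        rw [hneg] at hzeq
        linear_combination hzeq
      have hd1 : z - σO z ∈ I := by
        have h := I.neg_mem (hres z)
        rwa [neg_sub] at h
      have hd2 : (1 : 𝓞 K) - (ζ ^ ((p : ℕ) - 1)) ^ k ∈ I := by
        have h := I.neg_mem (hpowsub (((p : ℕ) - 1) * k))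
        rw [neg_sub, pow_mul] at h
        exact h
      have h2z : 2 * z ∈ I := by
        have hsplit : 2 * z = (z + (ζ ^ ((p : ℕ) - 1)) ^ k * σO z)
            + ((z - σO z) + σO z * ((1 : 𝓞 K) - (ζ ^ ((p : ℕ) - 1)) ^ k)) := by ring
        rw [hsplit, hsum, zero_add]
        exact I.add_mem hd1 (I.mul_mem_left _ hd2)
      rcases hIprime.mem_or_mem h2z with h | h
      · exact h2I h
      · exact hzI h
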